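/- Assume μ < δ/(1−γ), r ≥ (1−β)·c⁻·δ / ((1−γ)(1−βγ)), c⁻ ≥ βγ·c⁺ and c⁻ > (1−βγ)·c⁺, and let W be the piecewise-linear function of the small-threshold fixed point (built from the sequences s_k, ξ_k with s₀ = μ, ξ₀ = c⁺μ − r/(1−β), s_k = (s_{k−1}−δ)/γ, ξ_k = (c⁺ − ((1−β^kγ^k)/(1−βγ))c⁻)(s_k − s_{k−1}) + ξ_{k−1}). Set x° := max{0, s_{K−1}}. Then for every x ∈ [0,μ], the infimum over x̃ ≥ x and u ≥ 0 of (1−βγ)·c⁺·x̃ + c⁻·u − (r+β·c⁺·δ)·𝟙{x̃+u ≥ μ} + β·W(γ·x̃ + δ·𝟙{x̃+u ≥ μ}) is attained at x̃ = max{x, x°} and u = μ − max{x, x°}; equivalently, the agent's optimal action is pure gaming of magnitude μ − x when x ∈ [x°, μ], and the mixture (improvement x° − x, gaming μ − x°) when x ∈ [0, x°). -/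

import Mathlib

/-- `K := ⌈ log(1 - (1-βγ)c⁺/c⁻) / log(βγ) ⌉` (logarithm base `βγ`, rounded up). -/
noncomputable def bellK (β γ cplus cminus : ℝ) : ℕ :=
  ⌈Real.log (1 - (1 - β * γ) * cplus / cminus) / Real.log (β * γ)⌉₊

/-- The objective of the two-level Bellman equation at post-effort attribute `xt`
and gaming action `u`. -/
noncomputable def bellObj (β γ cplus cminus r δ μ : ℝ) (W : ℝ → ℝ) (xt u : ℝ) : ℝ :=
  (1 - β * γ) * cplus * xt + cminus * u
    - (r + β * cplus * δ) * (if μ ≤ xt + u then 1 else 0)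
    + β * W (γ * xt + δ * (if μ ≤ xt + u then 1 else 0))

set_option maxHeartbeats 2000000 in
/-- Theorem 3.1 (agent's optimal strategy for a small threshold): with the
small-threshold piecewise-linear fixed point `W` and `x° := max{0, s_{K-1}}`, for every
`x ∈ [0,μ]` the Bellman infimum over `x̃ ≥ x`, `u ≥ 0` is attained at
`x̃ = max{x, x°}`, `u = μ - max{x, x°}` (pure gaming if `x ≥ x°`, a mixture of
improvement `x° - x` and gaming `μ - x°` if `x < x°`). -/
theorem stmt_3 (β γ cplus cminus r δ μ : ℝ)
    (hβ : β ∈ Set.Ioo (0:ℝ) 1) (hγ : γ ∈ Set.Ioo (0:ℝ) 1)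
    (hcm : 0 < cminus) (hcmcp : cminus < cplus)
    (hr : 0 < r) (hδ : 0 ≤ δ) (hμpos : 0 < μ)
    (hμsmall : μ < δ / (1 - γ))
    (hrbig : (1 - β) * cminus * δ / ((1 - γ) * (1 - β * γ)) ≤ r)
    (hcm1 : β * γ * cplus ≤ cminus)
    (hcm2 : (1 - β * γ) * cplus < cminus)
    (s ξ : ℕ → ℝ)
    (hs0 : s 0 = μ) (hξ0 : ξ 0 = cplus * μ - r / (1 - β))
    (hsrec : ∀ k : ℕ, s (k + 1) = (s k - δ) / γ)
    (hξrec : ∀ k : ℕ, ξ (k + 1) =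
        (cplus - ((1 - (β * γ) ^ (k + 1)) / (1 - β * γ)) * cminus) * (s (k + 1) - s k) + ξ k)
    (W : ℝ → ℝ)
    (hW : ∀ x : ℝ, W x =
        (if x < s (bellK β γ cplus cminus - 1) then ξ (bellK β γ cplus cminus - 1) else 0)
        + ∑ k ∈ Finset.Icc 1 (bellK β γ cplus cminus - 1),
            (if s k ≤ x ∧ x < s (k - 1) then
              (cplus - ((1 - (β * γ) ^ k) / (1 - β * γ)) * cminus) * (x - s k) + ξ k else 0)
        + (if s 0 ≤ x then cplus * (x - s 0) + ξ 0 else 0)) :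
    ∀ x ∈ Set.Icc (0:ℝ) μ,
      IsLeast
        { v : ℝ | ∃ xt u : ℝ, x ≤ xt ∧ 0 ≤ u ∧ v = bellObj β γ cplus cminus r δ μ W xt u }
        (bellObj β γ cplus cminus r δ μ W
          (max x (max 0 (s (bellK β γ cplus cminus - 1))))
          (μ - max x (max 0 (s (bellK β γ cplus cminus - 1))))) := by
  obtain ⟨hβ0, hβ1⟩ := hβ
  obtain ⟨hγ0, hγ1⟩ := hγ
  intro x hx
  obtain ⟨hx0, hxμ⟩ := hx
  -- abbreviate K and N
  obtain ⟨K, hK⟩ : ∃ K', bellK β γ cplus cminus = K' := ⟨_, rfl⟩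
  rw [hK] at hW ⊢
  obtain ⟨N, hN⟩ : ∃ n, K - 1 = n := ⟨_, rfl⟩
  rw [hN] at hW ⊢
  -- basic positivity facts
  have hq0 : 0 < β * γ := mul_pos hβ0 hγ0
  have hq1 : β * γ < 1 := by nlinarith
  have h1q : 0 < 1 - β * γ := by linarith
  have h1γ : 0 < 1 - γ := by linarith
  have h1β : 0 < 1 - β := by linarith
  have hcp : 0 < cplus := lt_trans hcm hcmcp
  have hγne : γ ≠ 0 := ne_of_gt hγ0
  have hδμ : μ * (1 - γ) < δ := by
    have := (lt_div_iff₀ h1γ).mp hμsmall; linarith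
  have hδ0 : 0 < δ := lt_of_le_of_lt (by positivity) hδμ
  set D : ℝ := δ / (1 - γ) with hD
  have hDδ : D * (1 - γ) = δ := by rw [hD]; exact div_mul_cancel₀ δ (ne_of_gt h1γ)
  have hμD : μ < D := hμsmall
  have hD0 : 0 < D := by positivity
  -- slope functions
  set slp : ℕ → ℝ := fun k => cplus - (1 - (β * γ) ^ k) / (1 - β * γ) * cminus with hslp
  set L : ℕ → ℝ → ℝ := fun k y => slp k * (y - s k) + ξ k with hLdef
  have hslp0 : slp 0 = cplus := by simp [hslp]
  -- K facts
  have hKceil : K = ⌈Real.log (1 - (1 - β * γ) * cplus / cminus) / Real.log (β * γ)⌉₊ := by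
    rw [← hK, bellK]
  have hA0a : 0 < 1 - (1 - β * γ) * cplus / cminus := by
    have : (1 - β * γ) * cplus / cminus < 1 := (div_lt_one hcm).mpr hcm2
    linarith
  have hlog : Real.log (β * γ) < 0 := Real.log_neg hq0 hq1
  have hqK : (β * γ) ^ K ≤ 1 - (1 - β * γ) * cplus / cminus := by
    have h1 : Real.log (1 - (1 - β * γ) * cplus / cminus) / Real.log (β * γ) ≤ (K : ℝ) := by
      rw [hKceil]; exact Nat.le_ceil _
    have h2 : (K : ℝ) * Real.log (β * γ) ≤
        Real.log (1 - (1 - β * γ) * cplus / cminus) := (div_le_iff_of_neg hlog).mp h1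
    have h3 : Real.log ((β * γ) ^ K) ≤ Real.log (1 - (1 - β * γ) * cplus / cminus) := by
      rw [Real.log_pow]; exact_mod_cast h2
    exact (Real.log_le_log_iff (pow_pos hq0 K) hA0a).mp h3
  have hqk : ∀ k : ℕ, k < K → 1 - (1 - β * γ) * cplus / cminus < (β * γ) ^ k := by
    intro k hk
    have h1 : (k : ℝ) < Real.log (1 - (1 - β * γ) * cplus / cminus) / Real.log (β * γ) := by
      rw [hKceil] at hk; exact Nat.lt_ceil.mp hk
    have h2 : Real.log (1 - (1 - β * γ) * cplus / cminus) < (k : ℝ) * Real.log (β * γ) :=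
      (lt_div_iff_of_neg hlog).mp h1
    have h3 : Real.log (1 - (1 - β * γ) * cplus / cminus) < Real.log ((β * γ) ^ k) := by
      rw [Real.log_pow]; exact_mod_cast h2
    exact (Real.log_lt_log_iff hA0a (pow_pos hq0 k)).mp h3
  have hslpK : slp K ≤ 0 := by
    have h1 : (1 - β * γ) * cplus / cminus ≤ 1 - (β * γ) ^ K := by linarith
    have h2 : (1 - β * γ) * cplus ≤ (1 - (β * γ) ^ K) * cminus := by
      rw [div_le_iff₀ hcm] at h1; linarith
    have h3 : cplus ≤ (1 - (β * γ) ^ K) / (1 - β * γ) * cminus := by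
      rw [div_mul_eq_mul_div, le_div_iff₀ h1q]; linarith
    simp only [hslp]; linarith
  have hslppos : ∀ k : ℕ, k < K → 0 < slp k := by
    intro k hk
    have h1 := hqk k hk
    have h2 : (1 - (β * γ) ^ k) * cminus < (1 - β * γ) * cplus := by
      have : 1 - (β * γ) ^ k < (1 - β * γ) * cplus / cminus := by linarith
      rw [lt_div_iff₀ hcm] at this; linarith
    have h3 : (1 - (β * γ) ^ k) / (1 - β * γ) * cminus < cplus := by
      rw [div_mul_eq_mul_div, div_lt_iff₀ h1q]; linarith
    simp only [hslp]; linarith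
  have hK2 : 2 ≤ K := by
    by_contra hcon
    push_neg at hcon
    interval_cases K
    · have := hslpK; rw [hslp0] at this; linarith
    · have := hslpK
      have h1 : slp 1 = cplus - cminus := by
        simp only [hslp, pow_one]
        rw [div_self (ne_of_gt h1q)]; ring
      rw [h1] at this; linarith
  have hNK : N + 1 = K := by omega
  have hN1 : 1 ≤ N := by omega
  have hslpN : 0 < slp N := hslppos N (by omega)
  have hslpN1 : slp (N + 1) ≤ 0 := by rw [hNK]; exact hslpK
  have hslpposle : ∀ k : ℕ, k ≤ N → 0 < slp k := fun k hk => hslppos k (by omega)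
  have hslpcp : ∀ k : ℕ, slp k ≤ cplus := by
    intro k
    have h1 : (β * γ) ^ k ≤ 1 := pow_le_one₀ hq0.le hq1.le
    have h2 : 0 ≤ (1 - (β * γ) ^ k) / (1 - β * γ) * cminus :=
      mul_nonneg (div_nonneg (by linarith) h1q.le) hcm.le
    simp only [hslp]; linarith
  have hslpstep : ∀ k : ℕ, slp k - slp (k + 1) = (β * γ) ^ k * cminus := by
    intro k
    simp only [hslp]
    rw [pow_succ]
    field_simp
    ring
  have hslprec : ∀ k : ℕ, (1 - β * γ) * cplus - cminus + β * γ * slp k = slp (k + 1) := by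
    intro k
    simp only [hslp]
    rw [pow_succ]
    field_simp
    ring
  -- s facts
  have hsc : ∀ k : ℕ, s k = D - (D - μ) / γ ^ k := by
    intro k
    induction k with
    | zero => simp [hs0]
    | succ n ih =>
      rw [hsrec n, ih, pow_succ]
      rw [div_eq_iff hγne]
      have e1 : (D - μ) / (γ ^ n * γ) * γ = (D - μ) / γ ^ n := by
        field_simp
      linear_combination hDδ + e1
  have hTs : ∀ k : ℕ, γ * s (k + 1) + δ = s k := by
    intro k; rw [hsrec k]; field_simp; ring
  have hsmono : ∀ j k : ℕ, j ≤ k → s k ≤ s j := by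
    intro j k hjk
    rw [hsc j, hsc k]
    have h1 : γ ^ k ≤ γ ^ j := pow_le_pow_of_le_one hγ0.le hγ1.le hjk
    have h2 : (D - μ) / γ ^ j ≤ (D - μ) / γ ^ k := by
      apply div_le_div_of_nonneg_left (by linarith) (pow_pos hγ0 k) h1
    linarith
  have hsstrict : ∀ j k : ℕ, j < k → s k < s j := by
    intro j k hjk
    rw [hsc j, hsc k]
    have h1 : γ ^ k < γ ^ j := pow_lt_pow_right_of_lt_one₀ hγ0 hγ1 hjk
    have h2 : (D - μ) / γ ^ j < (D - μ) / γ ^ k := by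
      apply div_lt_div_of_pos_left (by linarith) (pow_pos hγ0 k) h1
    linarith
  have hsleμ : ∀ k : ℕ, s k ≤ μ := by
    intro k; have := hsmono 0 k (Nat.zero_le k); rw [hs0] at this; exact this
  -- ξ and L facts
  have hξrec' : ∀ k : ℕ, ξ (k + 1) = slp (k + 1) * (s (k + 1) - s k) + ξ k := by
    intro k; simp only [hslp]; exact hξrec k
  have hLcont : ∀ k : ℕ, L (k + 1) (s k) = ξ k := by
    intro k; simp only [hLdef]; rw [hξrec' k]; ring
  have hLdiff : ∀ (k : ℕ) (y : ℝ), L k y - L (k + 1) y = (β * γ) ^ k * cminus * (y - s k) := by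
    intro k y
    simp only [hLdef]
    have h1 := hξrec' k
    have h2 := hslpstep k
    linear_combination (y - s k) * h2 - h1
  have hmonoUp : ∀ (y : ℝ) (k j : ℕ), k ≤ j → (∀ i, k ≤ i → i < j → y ≤ s i) →
      L k y ≤ L j y := by
    intro y k j hkj
    induction j, hkj using Nat.le_induction with
    | base => intro _; exact le_rfl
    | succ n hn ih =>
      intro hyp
      have h1 : L k y ≤ L n y := ih (fun i hi1 hi2 => hyp i hi1 (by omega))
      have h2 := hLdiff n y
      have h3 : y ≤ s n := hyp n hn (by omega)
      have h4 : (β * γ) ^ n * cminus * (y - s n) ≤ 0 :=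
        mul_nonpos_of_nonneg_of_nonpos (by positivity) (by linarith)
      linarith
  have hmonoDown : ∀ (y : ℝ) (k j : ℕ), k ≤ j → (∀ i, k ≤ i → i < j → s i ≤ y) →
      L j y ≤ L k y := by
    intro y k j hkj
    induction j, hkj using Nat.le_induction with
    | base => intro _; exact le_rfl
    | succ n hn ih =>
      intro hyp
      have h1 : L n y ≤ L k y := ih (fun i hi1 hi2 => hyp i hi1 (by omega))
      have h2 := hLdiff n y
      have h3 : s n ≤ y := hyp n hn (by omega)
      have h4 : 0 ≤ (β * γ) ^ n * cminus * (y - s n) :=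
        mul_nonneg (by positivity) (by linarith)
      linarith
  -- W evaluation lemmas
  have hWP : ∀ (k : ℕ) (y : ℝ), 1 ≤ k → k ≤ N → s k ≤ y → y < s (k - 1) → W y = L k y := by
    intro k y hk1 hkN hky hyk
    rw [hW y]
    have h1 : ¬ (y < s N) := not_lt.mpr (le_trans (hsmono k N hkN) hky)
    have h3 : ¬ (s 0 ≤ y) := not_le.mpr (lt_of_lt_of_le hyk (hsmono 0 (k-1) (Nat.zero_le _)))
    rw [if_neg h1, if_neg h3]
    rw [Finset.sum_eq_single k]
    · rw [if_pos ⟨hky, hyk⟩]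
      simp only [hLdef, hslp]
      ring
    · intro b hb hbk
      obtain ⟨hb1, hbN⟩ := Finset.mem_Icc.mp hb
      rw [if_neg]
      rintro ⟨h4, h5⟩
      rcases lt_or_gt_of_ne hbk with hlt | hgt
      · have : s (k-1) ≤ s b := hsmono b (k-1) (by omega)
        linarith
      · have : s (b-1) ≤ s k := hsmono k (b-1) (by omega)
        linarith
    · intro hk; exact absurd (Finset.mem_Icc.mpr ⟨hk1, hkN⟩) hk
  have hWlow : ∀ y : ℝ, y < s N → W y = ξ N := by
    intro y hy
    have hlast : ¬ (s 0 ≤ y) :=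
      not_le.mpr (lt_of_lt_of_le hy (hsmono 0 N (Nat.zero_le N)))
    have hz : ∀ b ∈ Finset.Icc 1 N,
        (if s b ≤ y ∧ y < s (b-1) then
          (cplus - (1 - (β * γ) ^ b) / (1 - β * γ) * cminus) * (y - s b) + ξ b else 0) = (0:ℝ) := by
      intro b hb
      obtain ⟨hb1, hbN⟩ := Finset.mem_Icc.mp hb
      rw [if_neg]
      rintro ⟨h4, h5⟩
      have : s N ≤ s b := hsmono b N hbN
      linarith
    rw [hW y, if_pos hy, Finset.sum_eq_zero hz, if_neg hlast]
    ring
  have hWhigh : ∀ y : ℝ, s 0 ≤ y → W y = L 0 y := by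
    intro y hy
    have h1 : ¬ (y < s N) := not_lt.mpr (le_trans (hsmono 0 N (Nat.zero_le N)) hy)
    have hz : ∀ b ∈ Finset.Icc 1 N,
        (if s b ≤ y ∧ y < s (b-1) then
          (cplus - (1 - (β * γ) ^ b) / (1 - β * γ) * cminus) * (y - s b) + ξ b else 0) = (0:ℝ) := by
      intro b hb
      obtain ⟨hb1, hbN⟩ := Finset.mem_Icc.mp hb
      rw [if_neg]
      rintro ⟨h4, h5⟩
      have : s (b-1) ≤ s 0 := hsmono 0 (b-1) (Nat.zero_le _)
      linarith
    rw [hW y, if_neg h1, Finset.sum_eq_zero hz, if_pos hy]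
    simp only [hLdef, hslp, pow_zero, sub_self, zero_div, zero_mul, sub_zero]
    ring
  have hfind : ∀ (n : ℕ) (y : ℝ), s n ≤ y → y < s 0 →
      ∃ j, 1 ≤ j ∧ j ≤ n ∧ s j ≤ y ∧ y < s (j - 1) := by
    intro n
    induction n with
    | zero => intro y h1 h2; exact absurd h1 (not_le.mpr h2)
    | succ n ih =>
      intro y h1 h2
      by_cases hc : y < s n
      · exact ⟨n+1, by omega, le_rfl, h1, by simpa using hc⟩
      · obtain ⟨j, a, b, c, d⟩ := ih y (not_lt.mp hc) h2
        exact ⟨j, a, by omega, c, d⟩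
  have hloc : ∀ y : ℝ, y < s N ∨ (∃ j, 1 ≤ j ∧ j ≤ N ∧ s j ≤ y ∧ y < s (j-1)) ∨ s 0 ≤ y := by
    intro y
    by_cases h1 : s 0 ≤ y
    · exact Or.inr (Or.inr h1)
    · by_cases h2 : y < s N
      · exact Or.inl h2
      · exact Or.inr (Or.inl (hfind N y (not_lt.mp h2) (not_le.mp h1)))
  have hWge : ∀ k : ℕ, k ≤ N → ∀ y : ℝ, L k y ≤ W y := by
    intro k hk y
    rcases hloc y with hy | ⟨j, hj1, hjN, hjy, hyj⟩ | hy
    · rw [hWlow y hy]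
      have h1 : L k y ≤ L N y := hmonoUp y k N hk
        (fun i hi1 hi2 => le_of_lt (lt_of_lt_of_le hy (hsmono i N (by omega))))
      have h2 : L N y ≤ ξ N := by
        have h3 : slp N * (y - s N) ≤ 0 :=
          mul_nonpos_of_nonneg_of_nonpos hslpN.le (by linarith)
        simp only [hLdef]; linarith
      linarith
    · rw [hWP j y hj1 hjN hjy hyj]
      rcases le_total k j with hkj | hjk
      · exact hmonoUp y k j hkj
          (fun i hi1 hi2 => le_of_lt (lt_of_lt_of_le hyj (hsmono i (j-1) (by omega))))
      · exact hmonoDown y j k hjk (fun i hi1 hi2 => le_trans (hsmono j i hi1) hjy)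
    · rw [hWhigh y hy]
      exact hmonoDown y 0 k (Nat.zero_le k)
        (fun i hi1 hi2 => le_trans (hsmono 0 i (Nat.zero_le i)) hy)
  have hWmono : ∀ a b : ℝ, a ≤ b → W a ≤ W b := by
    intro a b hab
    rcases hloc a with ha | ⟨j, hj1, hjN, hja, haj⟩ | ha
    · rw [hWlow a ha]
      rcases lt_or_ge b (s N) with hb | hb
      · rw [hWlow b hb]
      · have h1 : L N b ≤ W b := hWge N le_rfl b
        have h2 : ξ N ≤ L N b := by
          have : 0 ≤ slp N * (b - s N) := mul_nonneg hslpN.le (by linarith)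
          simp only [hLdef]; linarith
        linarith
    · rw [hWP j a hj1 hjN hja haj]
      have h1 : L j b ≤ W b := hWge j hjN b
      have e : L j b - L j a = slp j * (b - a) := by simp only [hLdef]; ring
      have h2 : 0 ≤ slp j * (b - a) := mul_nonneg (hslpposle j hjN).le (by linarith)
      linarith
    · rw [hWhigh a ha]
      have h1 : L 0 b ≤ W b := hWge 0 (Nat.zero_le N) b
      have e : L 0 b - L 0 a = slp 0 * (b - a) := by simp only [hLdef]; ring
      have h2 : 0 ≤ slp 0 * (b - a) := mul_nonneg (by rw [hslp0]; exact hcp.le) (by linarith)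
      linarith
  have hWlip : ∀ a b : ℝ, a ≤ b → W b ≤ W a + cplus * (b - a) := by
    intro a b hab
    have hcb : 0 ≤ cplus * (b - a) := mul_nonneg hcp.le (by linarith)
    rcases hloc b with hb | ⟨j, hj1, hjN, hjb, hbj⟩ | hb
    · have ha : a < s N := lt_of_le_of_lt hab hb
      rw [hWlow b hb, hWlow a ha]; linarith
    · rw [hWP j b hj1 hjN hjb hbj]
      have h1 : L j a ≤ W a := hWge j hjN a
      have e : L j b - L j a = slp j * (b - a) := by simp only [hLdef]; ring
      have h2 : slp j * (b - a) ≤ cplus * (b - a) :=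
        mul_le_mul_of_nonneg_right (hslpcp j) (by linarith)
      linarith
    · rw [hWhigh b hb]
      have h1 : L 0 a ≤ W a := hWge 0 (Nat.zero_le N) a
      have e : L 0 b - L 0 a = slp 0 * (b - a) := by simp only [hLdef]; ring
      rw [hslp0] at e
      linarith
  have hINEQ : ∀ j : ℕ,
      cminus * (D * (1 - γ ^ j) - β * δ * ((1 - (β * γ) ^ j) / (1 - β * γ))) ≤ r := by
    intro j
    have hqγ : (β * γ) ^ j = β ^ j * γ ^ j := mul_pow β γ j
    have hgj : (0:ℝ) ≤ γ ^ j := (pow_pos hγ0 j).le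
    have key : 0 ≤ γ ^ j * ((1 - β * γ) - β ^ (j+1) * (1 - γ)) := by
      apply mul_nonneg hgj
      have hb : β ^ (j+1) ≤ 1 := pow_le_one₀ hβ0.le hβ1.le
      nlinarith
    have h1 : (1 - γ ^ j) * (1 - β * γ) - β * (1 - γ) * (1 - (β * γ) ^ j) ≤ 1 - β := by
      have e : β * (β * γ) ^ j = β ^ (j+1) * γ ^ j := by rw [hqγ, pow_succ]; ring
      nlinarith [key, e]
    have hσeq : (1 - (β * γ) ^ j) = ((1 - (β * γ) ^ j) / (1 - β * γ)) * (1 - β * γ) :=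
      (div_mul_cancel₀ _ (ne_of_gt h1q)).symm
    have hmul := mul_le_mul_of_nonneg_left h1 (mul_nonneg hcm.le hδ)
    have h2 : cminus * (D * (1 - γ ^ j) - β * δ * ((1 - (β * γ) ^ j) / (1 - β * γ)))
        ≤ (1 - β) * cminus * δ / ((1 - γ) * (1 - β * γ)) := by
      rw [le_div_iff₀ (by positivity)]
      have e1 : cminus * (D * (1 - γ ^ j) - β * δ * ((1 - (β * γ) ^ j) / (1 - β * γ)))
            * ((1 - γ) * (1 - β * γ))
          = cminus * δ * ((1 - γ ^ j) * (1 - β * γ) - β * (1 - γ) * (1 - (β * γ) ^ j)) := by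
        linear_combination (cminus * (1 - γ ^ j) * (1 - β * γ)) * hDδ
          + (cminus * β * δ * (1 - γ)) * hσeq
      rw [e1]
      nlinarith [hmul]
    linarith [hrbig, h2]
  -- the candidate optimum
  set xstar := max x (max 0 (s N)) with hxstar
  have hxxs : x ≤ xstar := le_max_left _ _
  have hxs0 : 0 ≤ xstar := le_trans (le_max_left 0 _) (le_max_right _ _)
  have hsNxs : s N ≤ xstar := le_trans (le_max_right 0 _) (le_max_right _ _)
  have hxsμ : xstar ≤ μ := max_le hxμ (max_le hμpos.le (hsleμ N))
  set F2 : ℝ → ℝ := fun t => (1 - β * γ) * cplus * t + cminus * (μ - t)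
      - (r + β * cplus * δ) + β * W (γ * t + δ) with hF2def
  -- value of W at s (N-1)
  have hWsN1 : W (s (N - 1)) = L N (s (N - 1)) := by
    have hLc : L N (s (N - 1)) = ξ (N - 1) := by
      have h := hLcont (N - 1)
      rw [show N - 1 + 1 = N by omega] at h
      exact h
    rw [hLc]
    rcases Nat.eq_zero_or_pos (N - 1) with h0 | hpos
    · rw [h0, hWhigh (s 0) le_rfl]
      simp only [hLdef]; ring
    · rw [hWP (N - 1) (s (N - 1)) hpos (by omega) le_rfl
        (hsstrict (N - 1 - 1) (N - 1) (by omega))]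
      simp only [hLdef]; ring
  -- minimality of F2 at xstar, right side
  have hC1a : ∀ t : ℝ, xstar ≤ t → F2 xstar ≤ F2 t := by
    intro t ht
    rcases hloc xstar with hlt | ⟨j, hj1, hjN, hjle, hjlt⟩ | hge
    · exact absurd hlt (not_lt.mpr hsNxs)
    · obtain ⟨i, rfl⟩ : ∃ i, j = i + 1 := ⟨j - 1, by omega⟩
      simp only [Nat.add_sub_cancel] at hjlt
      have hlow : s i ≤ γ * xstar + δ := by
        have h := hTs i
        have h2 : γ * s (i+1) ≤ γ * xstar := mul_le_mul_of_nonneg_left hjle hγ0.le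
        linarith
      have hTev : W (γ * xstar + δ) = L i (γ * xstar + δ) := by
        rcases Nat.eq_zero_or_pos i with rfl | hi
        · exact hWhigh _ (by rw [hs0] at hlow ⊢; exact hlow)
        · have hup : γ * xstar + δ < s (i - 1) := by
            have h := hTs (i - 1)
            rw [show i - 1 + 1 = i by omega] at h
            have h2 : γ * xstar < γ * s i := mul_lt_mul_of_pos_left hjlt hγ0
            linarith
          exact hWP i _ hi (by omega) hlow hup
      have e1 : L i (γ * t + δ) ≤ W (γ * t + δ) := hWge i (by omega) _
      have e5 : β * L i (γ * t + δ) ≤ β * W (γ * t + δ) :=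
        mul_le_mul_of_nonneg_left e1 hβ0.le
      have e2b : β * L i (γ * t + δ) - β * L i (γ * xstar + δ)
          = β * (slp i * (γ * (t - xstar))) := by
        have e2 : L i (γ * t + δ) - L i (γ * xstar + δ) = slp i * (γ * (t - xstar)) := by
          simp only [hLdef]; ring
        linear_combination β * e2
      have e6 : ((1 - β * γ) * cplus - cminus) * (t - xstar)
          + β * (slp i * (γ * (t - xstar))) = slp (i + 1) * (t - xstar) := by
        linear_combination (t - xstar) * hslprec i
      have e4 : 0 ≤ slp (i + 1) * (t - xstar) :=
        mul_nonneg (hslpposle (i + 1) hjN).le (by linarith)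
      simp only [hF2def]
      rw [hTev]
      linarith [e4, e5, e2b, e6]
    · have hxeq : xstar = μ := le_antisymm hxsμ (by rw [hs0] at hge; exact hge)
      have hlow : s 0 ≤ γ * xstar + δ := by
        rw [hs0, hxeq]; nlinarith
      have hTev : W (γ * xstar + δ) = L 0 (γ * xstar + δ) := hWhigh _ hlow
      have e1 : L 0 (γ * t + δ) ≤ W (γ * t + δ) := hWge 0 (Nat.zero_le N) _
      have e5 : β * L 0 (γ * t + δ) ≤ β * W (γ * t + δ) :=
        mul_le_mul_of_nonneg_left e1 hβ0.le
      have e2b : β * L 0 (γ * t + δ) - β * L 0 (γ * xstar + δ)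
          = β * (slp 0 * (γ * (t - xstar))) := by
        have e2 : L 0 (γ * t + δ) - L 0 (γ * xstar + δ) = slp 0 * (γ * (t - xstar)) := by
          simp only [hLdef]; ring
        linear_combination β * e2
      have e6 : ((1 - β * γ) * cplus - cminus) * (t - xstar)
          + β * (slp 0 * (γ * (t - xstar))) = slp 1 * (t - xstar) := by
        linear_combination (t - xstar) * hslprec 0
      have e4 : 0 ≤ slp 1 * (t - xstar) :=
        mul_nonneg (hslpposle 1 hN1).le (by linarith)
      simp only [hF2def]
      rw [hTev]
      linarith [e4, e5, e2b, e6]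
  -- minimality of F2 at xstar, left side
  have hC1c : ∀ t : ℝ, x ≤ t → t < xstar → F2 xstar ≤ F2 t := by
    intro t hxt htl
    rcases max_choice x (max 0 (s N)) with hch | hch
    · rw [hxstar, hch] at htl; linarith
    · rcases max_choice 0 (s N) with hch2 | hch2
      · rw [hxstar, hch, hch2] at htl; linarith
      · have hxeq : xstar = s N := by rw [hxstar, hch, hch2]
        have hTN : γ * xstar + δ = s (N - 1) := by
          rw [hxeq]
          have h := hTs (N - 1)
          rw [show N - 1 + 1 = N by omega] at h
          exact h
        have hW2 : W (γ * xstar + δ) = L N (γ * xstar + δ) := by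
          rw [hTN]; exact hWsN1
        have e1 : L N (γ * t + δ) ≤ W (γ * t + δ) := hWge N le_rfl _
        have e5 : β * L N (γ * t + δ) ≤ β * W (γ * t + δ) :=
          mul_le_mul_of_nonneg_left e1 hβ0.le
        have e2b : β * L N (γ * t + δ) - β * L N (γ * xstar + δ)
            = β * (slp N * (γ * (t - xstar))) := by
          have e2 : L N (γ * t + δ) - L N (γ * xstar + δ) = slp N * (γ * (t - xstar)) := by
            simp only [hLdef]; ring
          linear_combination β * e2
        have e6 : ((1 - β * γ) * cplus - cminus) * (t - xstar)
            + β * (slp N * (γ * (t - xstar))) = slp (N + 1) * (t - xstar) := by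
          linear_combination (t - xstar) * hslprec N
        have e4 : 0 ≤ slp (N + 1) * (t - xstar) :=
          mul_nonneg_of_nonpos_of_nonpos hslpN1 (by linarith : t - xstar ≤ 0)
        simp only [hF2def]
        rw [hW2]
        linarith [e4, e5, e2b, e6]
  have hC1 : ∀ t : ℝ, x ≤ t → F2 xstar ≤ F2 t := by
    intro t ht
    rcases le_or_gt xstar t with h | h
    · exact hC1a t h
    · exact hC1c t ht h
  -- main comparison: the no-promotion branch is dominated
  have hF1main : ∀ t : ℝ, x ≤ t → t < μ →
      F2 xstar ≤ (1 - β * γ) * cplus * t + β * W (γ * t) := by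
    rcases le_or_gt (s N) 0 with hsN0 | hsN0
    · -- case A : s N ≤ 0
      have hG0 : cminus * μ - (r + β * cplus * δ) + β * W δ ≤ β * W 0 := by
        obtain ⟨j, hj1, hjN, hjle, hjgt⟩ := hfind N 0 hsN0 (by rw [hs0]; exact hμpos)
        obtain ⟨i, rfl⟩ : ∃ i, j = i + 1 := ⟨j - 1, by omega⟩
        simp only [Nat.add_sub_cancel] at hjgt
        have hW0 : W 0 = L (i + 1) 0 := hWP (i + 1) 0 hj1 hjN hjle (by simpa using hjgt)
        have hWδ : W δ = L i δ := by
          have hlow : s i ≤ δ := by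
            have h := hTs i
            have h2 : γ * s (i + 1) ≤ 0 := mul_nonpos_of_nonneg_of_nonpos hγ0.le hjle
            linarith
          rcases Nat.eq_zero_or_pos i with rfl | hi
          · exact hWhigh δ hlow
          · have hup : δ < s (i - 1) := by
              have h := hTs (i - 1)
              rw [show i - 1 + 1 = i by omega] at h
              have h2 : 0 < γ * s i := mul_pos hγ0 hjgt
              linarith
            exact hWP i δ hi (by omega) hlow hup
        rw [hW0, hWδ]
        have hγi : (γ:ℝ) ^ i ≠ 0 := ne_of_gt (pow_pos hγ0 i)
        have hsi : s i = D - (D - μ) / γ ^ i := hsc i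
        have hE1 : γ * D ≤ (D - μ) / γ ^ i := by
          have h := hsc (i + 1)
          rw [pow_succ, ← div_div] at h
          rw [h] at hjle
          have h2 : D ≤ (D - μ) / γ ^ i / γ := by linarith
          have h3 : γ * D ≤ γ * ((D - μ) / γ ^ i / γ) := mul_le_mul_of_nonneg_left h2 hγ0.le
          have h4 : γ * ((D - μ) / γ ^ i / γ) = (D - μ) / γ ^ i := by
            rw [mul_comm, div_mul_cancel₀ _ hγne]
          linarith
        have hμE : μ = D - γ ^ i * ((D - μ) / γ ^ i) := by
          rw [mul_comm, div_mul_cancel₀ _ hγi]; ring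
        have hb : β * ((β * γ) ^ i * cminus) ≤ γ ^ i * cminus := by
          have h2 : β ^ (i + 1) ≤ 1 := pow_le_one₀ hβ0.le hβ1.le
          have h3 : 0 ≤ (1 - β ^ (i + 1)) * (γ ^ i * cminus) :=
            mul_nonneg (by linarith) (mul_nonneg (pow_pos hγ0 i).le hcm.le)
          have h4 : β * ((β * γ) ^ i * cminus) = β ^ (i + 1) * (γ ^ i * cminus) := by
            rw [mul_pow, pow_succ]; ring
          linarith only [h3, h4]
        have hδsi : 0 ≤ δ - s i := by
          rw [hsi]
          linarith only [hDδ, hE1]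
        have hstep1 : β * ((β * γ) ^ i * cminus) * (δ - s i) ≤ γ ^ i * cminus * (δ - s i) :=
          mul_le_mul_of_nonneg_right hb hδsi
        have hfin : β * slp (i + 1) * δ - β * cplus * δ
            = -(β * δ * cminus * ((1 - (β * γ) ^ (i + 1)) / (1 - β * γ))) := by
          simp only [hslp]; ring
        have e0 : cminus * μ - (r + β * cplus * δ) + β * L i δ - β * L (i + 1) 0
            = (cminus * (D * (1 - γ ^ (i + 1))
                  - β * δ * ((1 - (β * γ) ^ (i + 1)) / (1 - β * γ))) - r)
              + (β * ((β * γ) ^ i * cminus) * (δ - s i) - γ ^ i * cminus * (δ - s i)) := by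
          simp only [hLdef]
          linear_combination (-β) * hξrec' i + (β * (δ - s i)) * hslpstep i + hfin
            - γ ^ i * cminus * hsi + cminus * hμE - γ ^ i * cminus * hDδ
        have h6 : cminus * μ - (r + β * cplus * δ) + β * L i δ - β * L (i + 1) 0 ≤ 0 := by
          rw [e0]
          linarith only [hINEQ (i + 1), hstep1]
        linarith only [h6]
      intro t hxt htμ
      have ht0 : 0 ≤ t := le_trans hx0 hxt
      have hγt : 0 ≤ γ * t := mul_nonneg hγ0.le ht0
      have m1b : β * W 0 ≤ β * W (γ * t) :=
        mul_le_mul_of_nonneg_left (hWmono 0 (γ * t) hγt) hβ0.le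
      have m2 : W (γ * t + δ) ≤ W δ + cplus * ((γ * t + δ) - δ) :=
        hWlip δ (γ * t + δ) (by linarith)
      have m2b : β * W (γ * t + δ) ≤ β * W δ + β * (cplus * (γ * t)) := by
        have h1 := mul_le_mul_of_nonneg_left m2 hβ0.le
        have h2 : β * (W δ + cplus * ((γ * t + δ) - δ)) = β * W δ + β * (cplus * (γ * t)) := by
          ring
        linarith
      have m3 : (β * γ * cplus - cminus) * t ≤ 0 :=
        mul_nonpos_of_nonpos_of_nonneg (by linarith) ht0
      have hF2t : F2 t ≤ (1 - β * γ) * cplus * t + β * W (γ * t) := by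
        simp only [hF2def]
        linarith only [hG0, m1b, m2b, m3]
      linarith only [hC1 t hxt, hF2t]
    · -- case B : 0 < s N
      have hsN1e : s (N - 1) = γ * s N + δ := by
        have h := hTs (N - 1)
        rw [show N - 1 + 1 = N by omega] at h
        linarith
      have hγN : (γ:ℝ) ^ N ≠ 0 := ne_of_gt (pow_pos hγ0 N)
      have hKEY : (1 - β * γ) * cplus * s N + cminus * (μ - s N) - (r + β * cplus * δ)
          + β * (slp N * (s (N - 1) - s N)) ≤ 0 := by
        have hsN : s N = D - (D - μ) / γ ^ N := hsc N
        have hE0 : 0 ≤ (D - μ) / γ ^ N := div_nonneg (by linarith) (pow_pos hγ0 N).le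
        have hED : (D - μ) / γ ^ N ≤ D := by linarith [hsN0, hsN]
        have hμE : μ = D - γ ^ N * ((D - μ) / γ ^ N) := by
          rw [mul_comm, div_mul_cancel₀ _ hγN]; ring
        have hΨ : (1 - β * γ) * cplus * s N + cminus * (μ - s N) - (r + β * cplus * δ)
            + β * (slp N * (s (N - 1) - s N))
            = ((1 - β * γ) * cplus * D - r - β * cplus * δ)
              + (cminus * (1 - γ ^ N) + β * (1 - γ) * slp N - (1 - β * γ) * cplus)
                * ((D - μ) / γ ^ N) := by
          linear_combination (β * slp N) * hsN1e
            + ((1 - β * γ) * cplus - cminus + β * slp N * (γ - 1)) * hsN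
            + cminus * hμE - (β * slp N) * hDδ
        have hP0 : (1 - β * γ) * cplus * D - β * cplus * δ ≤ r := by
          have h1 : (1 - β * γ) * cplus * D - β * cplus * δ = cplus * D * (1 - β) := by
            linear_combination β * cplus * hDδ
          have h2 : cplus * D * (1 - β) ≤ (1 - β) * cminus * δ / ((1 - γ) * (1 - β * γ)) := by
            rw [le_div_iff₀ (by positivity)]
            have h3 : cplus * D * (1 - β) * ((1 - γ) * (1 - β * γ))
                = (1 - β * γ) * cplus * (δ * (1 - β)) := by
              linear_combination (cplus * (1 - β) * (1 - β * γ)) * hDδ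
            have h4 : (1 - β * γ) * cplus * (δ * (1 - β)) ≤ cminus * (δ * (1 - β)) :=
              mul_le_mul_of_nonneg_right hcm2.le (by positivity)
            linarith only [h3, h4]
          linarith only [h1, h2, hrbig]
        rcases le_total (cminus * (1 - γ ^ N) + β * (1 - γ) * slp N - (1 - β * γ) * cplus) 0
          with hCc | hCc
        · have h1 : (cminus * (1 - γ ^ N) + β * (1 - γ) * slp N - (1 - β * γ) * cplus)
              * ((D - μ) / γ ^ N) ≤ 0 := mul_nonpos_of_nonpos_of_nonneg hCc hE0
          rw [hΨ]
          linarith only [h1, hP0]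
        · have h1 : (cminus * (1 - γ ^ N) + β * (1 - γ) * slp N - (1 - β * γ) * cplus)
                * ((D - μ) / γ ^ N)
              ≤ (cminus * (1 - γ ^ N) + β * (1 - γ) * slp N - (1 - β * γ) * cplus) * D :=
            mul_le_mul_of_nonneg_left hED hCc
          have hfinN : ((1 - β * γ) * cplus * D - r - β * cplus * δ)
              + (cminus * (1 - γ ^ N) + β * (1 - γ) * slp N - (1 - β * γ) * cplus) * D
              = cminus * (D * (1 - γ ^ N)
                  - β * δ * ((1 - (β * γ) ^ N) / (1 - β * γ))) - r := by
            simp only [hslp]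
            linear_combination (β * (cplus - (1 - (β * γ) ^ N) / (1 - β * γ) * cminus)) * hDδ
          rw [hΨ]
          linarith only [h1, hfinN, hINEQ N]
      intro t hxt htμ
      have ht0 : 0 ≤ t := le_trans hx0 hxt
      have hAsN : 0 ≤ (1 - β * γ) * cplus * s N :=
        mul_nonneg (mul_nonneg h1q.le hcp.le) hsN0.le
      have hGs : cminus * (μ - s N) - (r + β * cplus * δ) + β * W (γ * s N + δ)
          ≤ β * W (γ * s N) := by
        have hWsn : W (γ * s N) = ξ N := hWlow _ (by nlinarith [mul_pos (show (0:ℝ) < 1 - γ by linarith) hsN0])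
        rw [hWsn, show γ * s N + δ = s (N - 1) by linarith [hsN1e], hWsN1]
        have e : β * L N (s (N - 1)) = β * (slp N * (s (N - 1) - s N)) + β * ξ N := by
          simp only [hLdef]; ring
        linarith only [hKEY, e, hAsN]
      rcases lt_or_ge t (s N) with htN | htN
      · -- pure constant region below s N
        have hWt : W (γ * t) = ξ N := by
          apply hWlow
          have h1 : γ * t ≤ t := by nlinarith [mul_nonneg (le_of_lt h1γ) ht0]
          linarith
        have hxeq : xstar = s N := by
          rw [hxstar, max_eq_right (le_of_lt hsN0), max_eq_right (by linarith : x ≤ s N)]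
        have hF2s : F2 xstar = (1 - β * γ) * cplus * s N + cminus * (μ - s N)
            - (r + β * cplus * δ) + β * (L N (s (N - 1))) := by
          simp only [hF2def]
          rw [hxeq, show γ * s N + δ = s (N - 1) by linarith [hsN1e], hWsN1]
        have hA : 0 ≤ (1 - β * γ) * cplus * t := mul_nonneg (mul_nonneg h1q.le hcp.le) ht0
        rw [hF2s, hWt]
        have e : β * L N (s (N - 1)) = β * (slp N * (s (N - 1) - s N)) + β * ξ N := by
          simp only [hLdef]; ring
        linarith only [hKEY, e, hA]
      · -- monotone-difference from s N
        have m1b : β * W (γ * s N) ≤ β * W (γ * t) :=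
          mul_le_mul_of_nonneg_left
            (hWmono _ _ (mul_le_mul_of_nonneg_left htN hγ0.le)) hβ0.le
        have m2 : W (γ * t + δ) ≤ W (γ * s N + δ)
            + cplus * ((γ * t + δ) - (γ * s N + δ)) :=
          hWlip _ _ (by linarith only [mul_le_mul_of_nonneg_left htN hγ0.le])
        have m2b : β * W (γ * t + δ) ≤ β * W (γ * s N + δ) + β * (cplus * (γ * (t - s N))) := by
          have h1 := mul_le_mul_of_nonneg_left m2 hβ0.le
          have h2 : β * (W (γ * s N + δ) + cplus * ((γ * t + δ) - (γ * s N + δ)))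
              = β * W (γ * s N + δ) + β * (cplus * (γ * (t - s N))) := by ring
          linarith
        have m3 : (β * γ * cplus - cminus) * (t - s N) ≤ 0 :=
          mul_nonpos_of_nonpos_of_nonneg (by linarith) (by linarith)
        have hF2t : F2 t ≤ (1 - β * γ) * cplus * t + β * W (γ * t) := by
          simp only [hF2def]
          linarith only [hGs, m1b, m2b, m3]
        linarith only [hC1 t hxt, hF2t]
  -- assemble
  constructor
  · exact ⟨xstar, μ - xstar, hxxs, by linarith [hxsμ], rfl⟩
  · rintro v ⟨xt, u, hxxt, hu0, rfl⟩
    have hstar : bellObj β γ cplus cminus r δ μ W xstar (μ - xstar) = F2 xstar := by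
      simp only [bellObj, hF2def]
      rw [if_pos (show μ ≤ xstar + (μ - xstar) by linarith)]
      ring
    rw [hstar]
    by_cases hind : μ ≤ xt + u
    · have h1 : bellObj β γ cplus cminus r δ μ W xt u
          = (1 - β * γ) * cplus * xt + cminus * u - (r + β * cplus * δ)
            + β * W (γ * xt + δ) := by
        simp only [bellObj, if_pos hind]
        ring
      have h2 : cminus * (μ - xt) ≤ cminus * u :=
        mul_le_mul_of_nonneg_left (by linarith) hcm.le
      have h3 := hC1 xt hxxt
      have h4 : F2 xt ≤ (1 - β * γ) * cplus * xt + cminus * u - (r + β * cplus * δ)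
          + β * W (γ * xt + δ) := by
        simp only [hF2def]
        linarith only [h2]
      rw [h1]
      linarith only [h3, h4]
    · push_neg at hind
      have h1 : bellObj β γ cplus cminus r δ μ W xt u
          = (1 - β * γ) * cplus * xt + cminus * u + β * W (γ * xt) := by
        simp only [bellObj, if_neg (not_le.mpr hind), mul_zero, add_zero, sub_zero]
      have h2 : 0 ≤ cminus * u := mul_nonneg hcm.le hu0
      have h3 := hF1main xt hxxt (by linarith)
      rw [h1]
      linarith only [h2, h3]
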